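/- Let n ≥ 1 and let x, y : {1,…,n} → {0,1}. The graph C(x,y) is connected if and only if there is no index i with x_i = y_i = 1. -/
import Mathlib


/-- Vertices of the `Cycles` construction: `a0 = a_{0,4}`, `b0 = b_{0,4}`,
`an = a_{n+1,1}`, `bn = b_{n+1,1}`, and `A i j = a_{i+1,j+1}`, `B i j = b_{i+1,j+1}`
for `i : Fin n`, `j : Fin 4`. -/
inductive CyVert (n : ℕ) : Type
  | a0 : CyVert n
  | b0 : CyVert n
  | an : CyVert n
  | bn : CyVert n
  | A : Fin n → Fin 4 → CyVert n
  | B : Fin n → Fin 4 → CyVert n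

/-- Edges of `C(x, y)`: `a0 ~ b0`; `an ~ bn`; rungs `a_{i,2} ~ b_{i,2}` and
`a_{i,3} ~ b_{i,3}`; chain edges `a_{i-1,4} ~ a_{i,1}` and `b_{i-1,4} ~ b_{i,1}`;
for each `i`: if `x i = 0` the edges `a_{i,1} ~ a_{i,3}` and `a_{i,2} ~ a_{i,4}`,
if `x i = 1` the edges `a_{i,1} ~ a_{i,2}` and `a_{i,3} ~ a_{i,4}`;
if `y i = 0` the edges `b_{i,1} ~ b_{i,4}` and `b_{i,2} ~ b_{i,3}`,
if `y i = 1` the edges `b_{i,1} ~ b_{i,2}` and `b_{i,3} ~ b_{i,4}`; no other edges. -/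
def cyRel {n : ℕ} (x y : Fin n → Fin 2) : CyVert n → CyVert n → Prop
  | .a0, .b0 => True
  | .an, .bn => True
  | .a0, .A i j => (i : ℕ) = 0 ∧ j = 0
  | .b0, .B i j => (i : ℕ) = 0 ∧ j = 0
  | .A i j, .an => (i : ℕ) = n - 1 ∧ j = 3
  | .B i j, .bn => (i : ℕ) = n - 1 ∧ j = 3
  | .A i j, .B k l => i = k ∧ j = l ∧ (j = 1 ∨ j = 2)
  | .A i j, .A k l =>
      ((k : ℕ) = (i : ℕ) + 1 ∧ j = 3 ∧ l = 0) ∨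
      (i = k ∧ ((x i = 0 ∧ ((j = 0 ∧ l = 2) ∨ (j = 1 ∧ l = 3))) ∨
                (x i = 1 ∧ ((j = 0 ∧ l = 1) ∨ (j = 2 ∧ l = 3)))))
  | .B i j, .B k l =>
      ((k : ℕ) = (i : ℕ) + 1 ∧ j = 3 ∧ l = 0) ∨
      (i = k ∧ ((y i = 0 ∧ ((j = 0 ∧ l = 3) ∨ (j = 1 ∧ l = 2))) ∨
                (y i = 1 ∧ ((j = 0 ∧ l = 1) ∨ (j = 2 ∧ l = 3)))))
  | _, _ => False

/-- The `Cycles` graph. -/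
def CyGraph {n : ℕ} (x y : Fin n → Fin 2) : SimpleGraph (CyVert n) :=
  SimpleGraph.fromRel (cyRel x y)

section Aux

variable {n : ℕ} {x y : Fin n → Fin 2}

/-- Reachability from `a0`. -/
def Rch (x y : Fin n → Fin 2) (v : CyVert n) : Prop :=
  (CyGraph x y).Reachable .a0 v

lemma rch_step {u v : CyVert n} (hu : Rch x y u) (hne : u ≠ v)
    (h : cyRel x y u v ∨ cyRel x y v u) : Rch x y v :=
  hu.trans (SimpleGraph.Adj.reachable ⟨hne, h⟩)

lemma gadget (i : Fin n) (hbad : ¬ (x i = 1 ∧ y i = 1))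
    (hA0 : Rch x y (.A i 0)) (hB0 : Rch x y (.B i 0)) :
    ∀ j, Rch x y (.A i j) ∧ Rch x y (.B i j) := by
  have hx2 : x i = 0 ∨ x i = 1 := by omega
  have hy2 : y i = 0 ∨ y i = 1 := by omega
  -- rung helpers
  have rung1 : cyRel x y (.A i 1) (.B i 1) := ⟨rfl, rfl, Or.inl rfl⟩
  have rung2 : cyRel x y (.A i 2) (.B i 2) := ⟨rfl, rfl, Or.inr rfl⟩
  have hAne : ∀ j l : Fin 4, j ≠ l → (CyVert.A i j : CyVert n) ≠ .A i l := by
    intro j l hjl h; injection h with h1 h2; exact hjl h2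
  have hBne : ∀ j l : Fin 4, j ≠ l → (CyVert.B i j : CyVert n) ≠ .B i l := by
    intro j l hjl h; injection h with h1 h2; exact hjl h2
  have hABne : ∀ j l : Fin 4, (CyVert.A i j : CyVert n) ≠ .B i l := by
    intro j l h; cases h
  rcases hx2 with hx | hx
  · rcases hy2 with hy | hy
    · -- x i = 0, y i = 0
      have hA2 : Rch x y (.A i 2) :=
        rch_step hA0 (hAne 0 2 (by decide)) (Or.inl (Or.inr ⟨rfl, Or.inl ⟨hx, Or.inl ⟨rfl, rfl⟩⟩⟩))
      have hB2 : Rch x y (.B i 2) := rch_step hA2 (hABne 2 2) (Or.inl rung2)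
      have hB1 : Rch x y (.B i 1) :=
        rch_step hB2 (hBne 2 1 (by decide)) (Or.inr (Or.inr ⟨rfl, Or.inl ⟨hy, Or.inr ⟨rfl, rfl⟩⟩⟩))
      have hA1 : Rch x y (.A i 1) := rch_step hB1 (hABne 1 1).symm (Or.inr rung1)
      have hA3 : Rch x y (.A i 3) :=
        rch_step hA1 (hAne 1 3 (by decide)) (Or.inl (Or.inr ⟨rfl, Or.inl ⟨hx, Or.inr ⟨rfl, rfl⟩⟩⟩))
      have hB3 : Rch x y (.B i 3) :=
        rch_step hB0 (hBne 0 3 (by decide)) (Or.inl (Or.inr ⟨rfl, Or.inl ⟨hy, Or.inl ⟨rfl, rfl⟩⟩⟩))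
      intro j
      fin_cases j <;> exact ⟨by assumption, by assumption⟩
    · -- x i = 0, y i = 1
      have hA2 : Rch x y (.A i 2) :=
        rch_step hA0 (hAne 0 2 (by decide)) (Or.inl (Or.inr ⟨rfl, Or.inl ⟨hx, Or.inl ⟨rfl, rfl⟩⟩⟩))
      have hB2 : Rch x y (.B i 2) := rch_step hA2 (hABne 2 2) (Or.inl rung2)
      have hB3 : Rch x y (.B i 3) :=
        rch_step hB2 (hBne 2 3 (by decide)) (Or.inl (Or.inr ⟨rfl, Or.inr ⟨hy, Or.inr ⟨rfl, rfl⟩⟩⟩))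
      have hB1 : Rch x y (.B i 1) :=
        rch_step hB0 (hBne 0 1 (by decide)) (Or.inl (Or.inr ⟨rfl, Or.inr ⟨hy, Or.inl ⟨rfl, rfl⟩⟩⟩))
      have hA1 : Rch x y (.A i 1) := rch_step hB1 (hABne 1 1).symm (Or.inr rung1)
      have hA3 : Rch x y (.A i 3) :=
        rch_step hA1 (hAne 1 3 (by decide)) (Or.inl (Or.inr ⟨rfl, Or.inl ⟨hx, Or.inr ⟨rfl, rfl⟩⟩⟩))
      intro j
      fin_cases j <;> exact ⟨by assumption, by assumption⟩
  · rcases hy2 with hy | hy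
    · -- x i = 1, y i = 0
      have hA1 : Rch x y (.A i 1) :=
        rch_step hA0 (hAne 0 1 (by decide)) (Or.inl (Or.inr ⟨rfl, Or.inr ⟨hx, Or.inl ⟨rfl, rfl⟩⟩⟩))
      have hB1 : Rch x y (.B i 1) := rch_step hA1 (hABne 1 1) (Or.inl rung1)
      have hB2 : Rch x y (.B i 2) :=
        rch_step hB1 (hBne 1 2 (by decide)) (Or.inl (Or.inr ⟨rfl, Or.inl ⟨hy, Or.inr ⟨rfl, rfl⟩⟩⟩))
      have hA2 : Rch x y (.A i 2) := rch_step hB2 (hABne 2 2).symm (Or.inr rung2)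
      have hA3 : Rch x y (.A i 3) :=
        rch_step hA2 (hAne 2 3 (by decide)) (Or.inl (Or.inr ⟨rfl, Or.inr ⟨hx, Or.inr ⟨rfl, rfl⟩⟩⟩))
      have hB3 : Rch x y (.B i 3) :=
        rch_step hB0 (hBne 0 3 (by decide)) (Or.inl (Or.inr ⟨rfl, Or.inl ⟨hy, Or.inl ⟨rfl, rfl⟩⟩⟩))
      intro j
      fin_cases j <;> exact ⟨by assumption, by assumption⟩
    · exact absurd ⟨hx, hy⟩ hbad

/-- The separating set when `x i = y i = 1`. -/
def inS {n : ℕ} (i : Fin n) : CyVert n → Prop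
  | .a0 => True
  | .b0 => True
  | .an => False
  | .bn => False
  | .A k j => (k : ℕ) < (i : ℕ) ∨ ((k : ℕ) = (i : ℕ) ∧ (j : ℕ) < 2)
  | .B k j => (k : ℕ) < (i : ℕ) ∨ ((k : ℕ) = (i : ℕ) ∧ (j : ℕ) < 2)

lemma rel_inS (i : Fin n) (hx : x i = 1) (hy : y i = 1) :
    ∀ u v, cyRel x y u v → (inS i u ↔ inS i v) := by
  have hi : (i : ℕ) < n := i.2
  intro u v h
  cases u <;> cases v <;> simp only [cyRel] at h <;> try exact h.elim
  · -- a0 b0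
    exact Iff.rfl
  · -- a0 A
    obtain ⟨h1, h2⟩ := h
    subst h2
    simp only [inS, true_iff]
    omega
  · -- b0 B
    obtain ⟨h1, h2⟩ := h
    subst h2
    simp only [inS, true_iff]
    omega
  · -- an bn
    exact Iff.rfl
  · -- A an
    obtain ⟨h1, h2⟩ := h
    subst h2
    simp only [inS, iff_false]
    push_neg
    refine ⟨by omega, fun _ => by decide⟩
  · -- A A
    rename_i k j k' l
    simp only [inS]
    rcases h with ⟨h1, h2, h3⟩ | ⟨h1, h⟩
    · subst h2; subst h3
      simp only [show ((3 : Fin 4) : ℕ) = 3 from rfl, show ((0 : Fin 4) : ℕ) = 0 from rfl,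
        Fin.val_zero]
      omega
    · subst h1
      by_cases hk : (k : ℕ) = (i : ℕ)
      · have hk' : k = i := Fin.ext hk
        subst hk'
        rcases h with ⟨h0, h⟩ | ⟨h1', h⟩
        · rw [hx] at h0; exact absurd h0 (by decide)
        · rcases h with ⟨hj, hl⟩ | ⟨hj, hl⟩ <;> subst hj <;> subst hl <;> simp <;> omega
      · rcases h with ⟨h0, h⟩ | ⟨h1', h⟩ <;>
          rcases h with ⟨hj, hl⟩ | ⟨hj, hl⟩ <;> subst hj <;> subst hl <;>
          constructor <;> intro hh <;> omega
  · -- A B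
    rename_i k j k' l
    obtain ⟨h1, h2, h3⟩ := h
    subst h1; subst h2
    exact Iff.rfl
  · -- B bn
    obtain ⟨h1, h2⟩ := h
    subst h2
    simp only [inS, iff_false]
    push_neg
    refine ⟨by omega, fun _ => by decide⟩
  · -- B B
    rename_i k j k' l
    simp only [inS]
    rcases h with ⟨h1, h2, h3⟩ | ⟨h1, h⟩
    · subst h2; subst h3
      simp only [show ((3 : Fin 4) : ℕ) = 3 from rfl, show ((0 : Fin 4) : ℕ) = 0 from rfl,
        Fin.val_zero]
      omega
    · subst h1
      by_cases hk : (k : ℕ) = (i : ℕ)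
      · have hk' : k = i := Fin.ext hk
        subst hk'
        rcases h with ⟨h0, h⟩ | ⟨h1', h⟩
        · rw [hy] at h0; exact absurd h0 (by decide)
        · rcases h with ⟨hj, hl⟩ | ⟨hj, hl⟩ <;> subst hj <;> subst hl <;> simp <;> omega
      · rcases h with ⟨h0, h⟩ | ⟨h1', h⟩ <;>
          rcases h with ⟨hj, hl⟩ | ⟨hj, hl⟩ <;> subst hj <;> subst hl <;>
          constructor <;> intro hh <;> omega

lemma reach_invariant {V : Type*} (G : SimpleGraph V) (S : V → Prop)
    (h : ∀ u v, G.Adj u v → (S u ↔ S v)) {a b : V} (hr : G.Reachable a b) :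
    S a ↔ S b := by
  obtain ⟨w⟩ := hr
  induction w with
  | nil => exact Iff.rfl
  | cons hadj w ih => exact (h _ _ hadj).trans ih

end Aux


theorem stmt_13 {n : ℕ} (hn : 1 ≤ n) (x y : Fin n → Fin 2) :
    (CyGraph x y).Connected ↔ ¬ ∃ i, x i = 1 ∧ y i = 1 := by
  constructor
  · rintro hconn ⟨i, hx1, hy1⟩
    have hr : (CyGraph x y).Reachable .a0 .an := hconn.preconnected _ _
    have key : ∀ u v : CyVert n, (CyGraph x y).Adj u v → (inS i u ↔ inS i v) := by
      rintro u v ⟨hne, h | h⟩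
      · exact rel_inS i hx1 hy1 u v h
      · exact (rel_inS i hx1 hy1 v u h).symm
    have := reach_invariant (CyGraph x y) (inS i) key hr
    simp only [inS] at this
    exact this.mp trivial
  · intro hno
    have hbad : ∀ i : Fin n, ¬ (x i = 1 ∧ y i = 1) := fun i h => hno ⟨i, h⟩
    have hb0 : Rch x y (.b0 : CyVert n) :=
      rch_step (SimpleGraph.Reachable.refl _) (fun h => by cases h) (Or.inl trivial)
    have main : ∀ m, ∀ hm : m < n, ∀ j,
        Rch x y (.A ⟨m, hm⟩ j) ∧ Rch x y (.B ⟨m, hm⟩ j) := by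
      intro m
      induction m with
      | zero =>
        intro hm
        have hA0 : Rch x y (.A ⟨0, hm⟩ 0) :=
          rch_step (SimpleGraph.Reachable.refl _) (fun h => by cases h) (Or.inl ⟨rfl, rfl⟩)
        have hB0 : Rch x y (.B ⟨0, hm⟩ 0) :=
          rch_step hb0 (fun h => by cases h) (Or.inl ⟨rfl, rfl⟩)
        exact gadget _ (hbad _) hA0 hB0
      | succ k ih =>
        intro hm
        have hk : k < n := Nat.lt_of_succ_lt hm
        have h3 := ih hk 3
        have hA0 : Rch x y (.A ⟨k + 1, hm⟩ 0) :=
          rch_step h3.1 (fun h => by injection h with h1 h2; exact absurd (congrArg Fin.val h1) (by simp)) (Or.inl (Or.inl ⟨rfl, rfl, rfl⟩))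
        have hB0 : Rch x y (.B ⟨k + 1, hm⟩ 0) :=
          rch_step h3.2 (fun h => by injection h with h1 h2; exact absurd (congrArg Fin.val h1) (by simp)) (Or.inl (Or.inl ⟨rfl, rfl, rfl⟩))
        exact gadget _ (hbad _) hA0 hB0
    have hn1 : n - 1 < n := by omega
    have han : Rch x y (.an : CyVert n) :=
      rch_step (main (n - 1) hn1 3).1 (fun h => by cases h) (Or.inl ⟨rfl, rfl⟩)
    have hbn : Rch x y (.bn : CyVert n) :=
      rch_step han (fun h => by cases h) (Or.inl trivial)
    have hall : ∀ v : CyVert n, Rch x y v := by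
      intro v
      cases v with
      | a0 => exact SimpleGraph.Reachable.refl _
      | b0 => exact hb0
      | an => exact han
      | bn => exact hbn
      | A i j => have := (main i.1 i.2 j).1; simpa using this
      | B i j => have := (main i.1 i.2 j).2; simpa using this
    haveI : Nonempty (CyVert n) := ⟨.a0⟩
    exact SimpleGraph.Connected.mk fun u v => (hall u).symm.trans (hall v)
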